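/- Walk-set monotonicity under path extension: let P = ⟨v, …, t⟩ be a simple path ending at t and let P_e = ⟨u, v, …, t⟩ be a simple path extending P by one additional initial vertex u (so that ⟨u,v⟩ ∈ E and u does not occur in P). Then every walk associated with P_e whose certifying suffix, after loop erasure, equals P_e, contains a (shorter) suffix witnessing association with P; consequently W_G^{P_e} ⊆ W_G^{P}. -/

import Mathlib

variable {V : Type*}

/-- A walk in a directed graph with edge relation `E`: a nonempty vertex list
with every consecutive pair an edge. -/
def IsWalk (E : V → V → Prop) (W : List V) : Prop :=
  W ≠ [] ∧ W.Chain' E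

/-- A simple path: a walk with no repeated vertices. -/
def IsSimplePath (E : V → V → Prop) (P : List V) : Prop :=
  IsWalk E P ∧ P.Nodup

/-- `(a,b)` occurs as a consecutive pair (an edge) of the path `P`. -/
def edgeIn (P : List V) (a b : V) : Prop :=
  (a, b) ∈ P.zip P.tail

/-- Admissible step w.r.t. `P`: a repeated vertex, or exactly one of the
forward/backward edges occurs in `P`. -/
def PStep (P : List V) (a b : V) : Prop :=
  a = b ∨ Xor' (edgeIn P a b) (edgeIn P b a)

/-- Loop erasure: repeatedly delete the cycle at the first repeated vertex. -/
def loopErase [DecidableEq V] : List V → List V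
  | [] => []
  | v :: l =>
    if h : v ∈ l then loopErase (v :: l.drop (l.idxOf v + 1))
    else v :: loopErase l
termination_by l => l.length
decreasing_by
  · have h1 : l.idxOf v < l.length := List.idxOf_lt_length_iff.mpr h
    simp only [List.length_cons, List.length_drop]
    omega
  · simp

/-- `S` is a suffix certifying association with the simple path `P` ending at `t`:
it starts at the first vertex of `P`, ends at `t`, has no intermediate occurrence
of `t`, all of its steps are admissible w.r.t. `P`, and its loop erasure is `P`. -/
def Certifies [DecidableEq V] (P S : List V) (t : V) : Prop :=
  S ≠ [] ∧ S.head? = P.head? ∧ S.getLast? = some t ∧ t ∉ S.dropLast ∧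
  S.Chain' (PStep P) ∧ loopErase S = P

/-- A walk `W` is associated with the simple path `P` ending at `t`. -/
def AssocWalk [DecidableEq V] (E : V → V → Prop) (P W : List V) (t : V) : Prop :=
  IsWalk E W ∧ ∃ S, S <:+ W ∧ Certifies P S t


theorem loopErase_head? [DecidableEq V] (l : List V) :
    (loopErase l).head? = l.head? := by
  induction l using loopErase.induct with
  | case1 => rw [loopErase]
  | case2 v l hv ih => rw [loopErase, dif_pos hv]; rw [ih]; rfl
  | case3 v l hv ih => rw [loopErase, dif_neg hv]; rfl

theorem loopErase_cons_exists [DecidableEq V] (S : List V) :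
    ∀ (u : V) (m : List V), loopErase S = u :: m →
      ∃ S₂, u :: S₂ <:+ S ∧ u ∉ S₂ ∧ loopErase S₂ = m := by
  induction S using loopErase.induct with
  | case1 => intro u m h; rw [loopErase] at h; exact absurd h (by simp)
  | case2 v l hv ih =>
    intro u m h
    rw [loopErase, dif_pos hv] at h
    obtain ⟨S₂, hsuf, hu, hle⟩ := ih u m h
    refine ⟨S₂, ?_, hu, hle⟩
    have hidx : l.idxOf v < l.length := List.idxOf_lt_length_iff.mpr hv
    have hdrop : l.drop (l.idxOf v) = v :: l.drop (l.idxOf v + 1) := by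
      rw [List.drop_eq_getElem_cons hidx, List.getElem_idxOf hidx]
    rcases List.suffix_cons_iff.mp hsuf with heq | hsuf'
    · rw [heq, ← hdrop]
      exact (List.drop_suffix _ _).trans (List.suffix_cons v l)
    · exact (hsuf'.trans (List.drop_suffix _ _)).trans (List.suffix_cons v l)
  | case3 v l hv ih =>
    intro u m h
    rw [loopErase, dif_neg hv] at h
    obtain ⟨rfl, rfl⟩ : v = u ∧ loopErase l = m := by
      injection h with h1 h2; exact ⟨h1, h2⟩
    exact ⟨l, List.suffix_refl _, hv, rfl⟩

theorem getLast?_of_suffix {l₁ l : List V} (h : l₁ <:+ l) (hne : l₁ ≠ []) :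
    l.getLast? = l₁.getLast? := by
  obtain ⟨A, rfl⟩ := h
  rw [List.getLast?_append]
  cases h' : l₁.getLast? with
  | none =>
    have := List.getLast?_isSome.mpr hne
    rw [h'] at this; simp at this
  | some x => rfl

theorem edgeIn_cons {u p : V} {P' : List V} {a b : V} :
    edgeIn (u :: p :: P') a b ↔ (a = u ∧ b = p) ∨ edgeIn (p :: P') a b := by
  simp [edgeIn, Prod.ext_iff]

theorem pstep_cons {u p : V} {P' : List V} {a b : V} (ha : a ≠ u) (hb : b ≠ u)
    (h : PStep (u :: p :: P') a b) : PStep (p :: P') a b := by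
  rcases h with h | h
  · exact Or.inl h
  · have h1 : edgeIn (u :: p :: P') a b ↔ edgeIn (p :: P') a b := by
      rw [edgeIn_cons]; simp [ha]
    have h2 : edgeIn (u :: p :: P') b a ↔ edgeIn (p :: P') b a := by
      rw [edgeIn_cons]; simp [hb]
    right; rwa [h1, h2] at h

theorem chain'_pstep_of_not_mem {u p : V} {P' : List V} :
    ∀ {l : List V}, u ∉ l → l.Chain' (PStep (u :: p :: P')) →
      l.Chain' (PStep (p :: P'))
  | [], _, _ => List.isChain_nil
  | [a], _, _ => List.isChain_singleton a
  | a :: b :: l, hu, hc => by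
    unfold List.Chain' at hc ⊢; rw [List.isChain_cons_cons] at hc ⊢
    have ha : a ≠ u := fun h => hu (by simp [h])
    have hb : b ≠ u := fun h => hu (by simp [h])
    have hu' : u ∉ b :: l := fun h => hu (List.mem_cons_of_mem a h)
    exact ⟨pstep_cons ha hb hc.1, chain'_pstep_of_not_mem hu' hc.2⟩

/-- walk-set monotonicity under one-step path extension:
if `P` is a simple path ending at `t` and `Pₑ = u :: P` is a simple path
extending `P` by a new initial vertex `u` (so `⟨u, head P⟩ ∈ E` and `u ∉ P`),
then every walk associated with `Pₑ` is also associated with `P`;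
i.e. `W_G^{Pₑ} ⊆ W_G^{P}`. -/
theorem assocWalks_subset_of_extension {V : Type*} [DecidableEq V]
    (E : V → V → Prop) (P : List V) (u t : V)
    (hP : IsSimplePath E P) (ht : P.getLast? = some t)
    (hPe : IsSimplePath E (u :: P)) :
    {W : List V | AssocWalk E (u :: P) W t} ⊆ {W : List V | AssocWalk E P W t} := by
  intro W hW
  obtain ⟨hWalk, S, hSW, hSne, hhead, hlast, hdl, hchain, hle⟩ := hW
  obtain ⟨p, P', rfl⟩ : ∃ p P', P = p :: P' := by
    cases P with
    | nil => exact absurd rfl hP.1.1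
    | cons p P' => exact ⟨p, P', rfl⟩
  obtain ⟨S₂, hsuf, hu, hle2⟩ := loopErase_cons_exists S u (p :: P') hle
  have hsuf' : S₂ <:+ S := (List.suffix_cons u S₂).trans hsuf
  have hS₂ne : S₂ ≠ [] := by
    intro h; rw [h, loopErase] at hle2; exact absurd hle2 (by simp)
  obtain ⟨A, hA⟩ := hsuf
  refine ⟨hWalk, S₂, hsuf'.trans hSW, hS₂ne, ?_, ?_, ?_, ?_, hle2⟩
  · rw [← hle2, loopErase_head?]
  · rw [← getLast?_of_suffix hsuf' hS₂ne]; exact hlast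
  · intro hmem
    apply hdl
    have hA' : S = (A ++ [u]) ++ S₂ := by rw [← hA]; simp
    rw [hA', List.dropLast_append_of_ne_nil hS₂ne]
    exact List.mem_append_right _ hmem
  · exact chain'_pstep_of_not_mem hu (hchain.suffix hsuf')
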